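/- For every integer k ≥ 1, (k+1)/(2k+1) · ∑_{i=0}^{k} [C(k,i)·C(k,k-i)/C(2k,k)] · 1/(k+1-i) = 1/(k+1). -/

import Mathlib

theorem stmt_19 (k : ℕ) (hk : 1 ≤ k) :
    (((k : ℚ) + 1) / (2 * (k : ℚ) + 1))
        * ∑ i ∈ Finset.range (k + 1),
            ((k.choose i : ℚ) * (k.choose (k - i) : ℚ) / ((2 * k).choose k : ℚ))
              * (1 / ((k : ℚ) + 1 - (i : ℚ)))
      = 1 / ((k : ℚ) + 1) := by
  have hC : ((2 * k).choose k : ℚ) ≠ 0 := by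
    exact_mod_cast Nat.choose_pos (by omega : k ≤ 2 * k) |>.ne'
  have hstep : ∀ i ∈ Finset.range (k + 1),
      ((k.choose i : ℚ) * (k.choose (k - i) : ℚ) / ((2 * k).choose k : ℚ))
          * (1 / ((k : ℚ) + 1 - (i : ℚ)))
        = ((k.choose i * (k + 1).choose (k + 1 - i) : ℕ) : ℚ)
            / (((k : ℚ) + 1) * ((2 * k).choose k : ℚ)) := by
    intro i hi
    have hik : i ≤ k := by simpa [Nat.lt_succ_iff] using hi
    have hne : ((k : ℚ) + 1 - (i : ℚ)) ≠ 0 := by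
      have : (i : ℚ) ≤ (k : ℚ) := by exact_mod_cast hik
      linarith
    have hmul := Nat.add_one_mul_choose_eq k (k - i)
    have hidx : k - i + 1 = k + 1 - i := by omega
    rw [hidx] at hmul
    have hq : ((k : ℚ) + 1) * (k.choose (k - i) : ℚ)
        = ((k + 1).choose (k + 1 - i) : ℚ) * ((k : ℚ) + 1 - (i : ℚ)) := by
      have hcast : ((k + 1 - i : ℕ) : ℚ) = (k : ℚ) + 1 - (i : ℚ) := by
        push_cast [Nat.cast_sub (by omega : i ≤ k + 1)]; ring
      have := congrArg (fun n : ℕ => (n : ℚ)) hmul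
      push_cast at this
      rw [← hcast]
      push_cast
      linarith [this]
    rw [Nat.choose_symm hik] at hq
    push_cast
    rw [Nat.choose_symm hik]
    field_simp
    linear_combination (k.choose i : ℚ) * hq
  rw [Finset.sum_congr rfl hstep]
  have hV : ∑ i ∈ Finset.range (k + 2), k.choose i * (k + 1).choose (k + 1 - i)
      = (2 * k + 1).choose (k + 1) := by
    rw [show 2 * k + 1 = k + (k + 1) by ring, Nat.add_choose_eq,
      Finset.Nat.sum_antidiagonal_eq_sum_range_succ_mk]
  have hsum : ∑ i ∈ Finset.range (k + 1), k.choose i * (k + 1).choose (k + 1 - i)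
      = (2 * k + 1).choose (k + 1) := by
    rw [← hV]
    conv_rhs => rw [Finset.sum_range_succ]
    simp [Nat.choose_eq_zero_of_lt (Nat.lt_succ_self k)]
  rw [← Finset.sum_div, ← Nat.cast_sum, hsum]
  have hS : ((2 * k + 1).choose (k + 1) : ℚ) * ((k : ℚ) + 1)
      = (2 * (k : ℚ) + 1) * ((2 * k).choose k : ℚ) := by
    have := Nat.add_one_mul_choose_eq (2 * k) k
    have := congrArg (fun n : ℕ => (n : ℚ)) this
    push_cast at this
    linarith
  have hk1 : ((k : ℚ) + 1) ≠ 0 := by positivity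
  have h2k1 : (2 * (k : ℚ) + 1) ≠ 0 := by positivity
  field_simp
  nlinarith [hS]
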